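/- Assume 0 < ν_* ≤ ν(t) ≤ ν* < 1 for all t ∈ [0,T], and set π_A = (Γ(1−ν*)/Γ(1−ν_*)) · max{1, T^{ν*−ν_*}}. Define the discrete kernels A^{(n)}_{n−k} = b^{(ν)}_{n,k}/τ for 1 ≤ k ≤ n ≤ N. Then for every 1 ≤ k ≤ n ≤ N, A^{(n)}_{n−k} ≥ (1/(π_A τ)) ∫_{t_{k−1}}^{t_k} (t_n − s)^{−ν_*}/Γ(1−ν_*) ds. -/

import Mathlib

open Finset intervalIntegral

/-- Gamma is antitone on (0,1]. -/
lemma my_gamma_anti {a b : ℝ} (ha : 0 < a) (hab : a ≤ b) (hb1 : b ≤ 1) :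
    Real.Gamma b ≤ Real.Gamma a := by
  have h2a : 0 < 2 - a := by linarith
  have hmem2 : (2 : ℝ) ∈ Set.Ioi (0 : ℝ) := by norm_num
  have hmema : a ∈ Set.Ioi (0 : ℝ) := ha
  have ha1 : a ≤ 1 := hab.trans hb1
  have hlog : 0 ≤ Real.log (Real.Gamma a) := by
    have hc := Real.convexOn_log_Gamma.2 hmema hmem2
      (show (0:ℝ) ≤ 1 / (2 - a) by positivity)
      (show (0:ℝ) ≤ (1 - a) / (2 - a) by
        apply div_nonneg <;> linarith)
      (show 1 / (2 - a) + (1 - a) / (2 - a) = 1 by field_simp; ring)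
    have hpt : (1 / (2 - a)) • a + ((1 - a) / (2 - a)) • (2:ℝ) = 1 := by
      simp only [smul_eq_mul]; field_simp; ring
    rw [hpt] at hc
    simp only [Function.comp, smul_eq_mul, Real.Gamma_one, Real.Gamma_two, Real.log_one] at hc
    have hw1 : 0 < 1 / (2 - a) := by positivity
    nlinarith [hc]
  have hlog2 : Real.log (Real.Gamma b) ≤ Real.log (Real.Gamma a) := by
    have hc := Real.convexOn_log_Gamma.2 hmema hmem2
      (show (0:ℝ) ≤ (2 - b) / (2 - a) by apply div_nonneg <;> linarith)
      (show (0:ℝ) ≤ (b - a) / (2 - a) by apply div_nonneg <;> linarith)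
      (show (2 - b) / (2 - a) + (b - a) / (2 - a) = 1 by field_simp; ring)
    have hpt : ((2 - b) / (2 - a)) • a + ((b - a) / (2 - a)) • (2:ℝ) = b := by
      simp only [smul_eq_mul]; field_simp; ring
    rw [hpt] at hc
    simp only [Function.comp, smul_eq_mul, Real.Gamma_two, Real.log_one, mul_zero,
      add_zero] at hc
    refine hc.trans ?_
    have hw1 : (2 - b) / (2 - a) ≤ 1 := by
      rw [div_le_one h2a]; linarith
    exact mul_le_of_le_one_left hlog hw1
  calc Real.Gamma b = Real.exp (Real.log (Real.Gamma b)) :=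
        (Real.exp_log (Real.Gamma_pos_of_pos (ha.trans_le hab))).symm
    _ ≤ Real.exp (Real.log (Real.Gamma a)) := Real.exp_le_exp.mpr hlog2
    _ = Real.Gamma a := Real.exp_log (Real.Gamma_pos_of_pos ha)

/-- Under 0 < ν_* ≤ ν(t) ≤ ν* < 1 on [0,T], with
`π_A = (Γ(1-ν*)/Γ(1-ν_*)) · max{1, T^(ν*-ν_*)}` and discrete kernels
`A^{(n)}_{n-k} = b_{n,k}/τ`, for every 1 ≤ k ≤ n ≤ N one has
`A^{(n)}_{n-k} ≥ (1/(π_A τ)) ∫_{t_{k-1}}^{t_k} (t_n - s)^(-ν_*)/Γ(1-ν_*) ds`. -/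
theorem discrete_kernel_lower_bound
    (T : ℝ) (hT : 0 < T) (N : ℕ) (hN : 0 < N)
    (τ : ℝ) (hτ : τ = T / N)
    (t : ℕ → ℝ) (ht : ∀ k, t k = k * τ)
    (ν : ℝ → ℝ) (νs νS : ℝ) (hνs : 0 < νs) (hνS : νS < 1)
    (hν : ∀ s ∈ Set.Icc (0 : ℝ) T, νs ≤ ν s ∧ ν s ≤ νS)
    (b : ℕ → ℕ → ℝ)
    (hb : ∀ n k, 1 ≤ k → k ≤ n → n ≤ N →
      b n k = (1 / Real.Gamma (2 - ν (t n))) *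
        ((t n - t (k - 1)) ^ (1 - ν (t n)) - (t n - t k) ^ (1 - ν (t n))))
    (πA : ℝ)
    (hπA : πA = (Real.Gamma (1 - νS) / Real.Gamma (1 - νs)) * max 1 (T ^ (νS - νs)))
    (A : ℕ → ℕ → ℝ)
    (hA : ∀ n k, 1 ≤ k → k ≤ n → n ≤ N → A n (n - k) = b n k / τ) :
    ∀ n k, 1 ≤ k → k ≤ n → n ≤ N →
      A n (n - k) ≥ (1 / (πA * τ)) *
        ∫ s in (t (k - 1))..(t k), (t n - s) ^ (-νs) / Real.Gamma (1 - νs) := by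
  intro n k hk hkn hnN
  have hτ0 : 0 < τ := by rw [hτ]; positivity
  -- mesh point bounds
  have htmem : ∀ m : ℕ, m ≤ N → t m ∈ Set.Icc (0:ℝ) T := by
    intro m hm
    rw [ht]
    constructor
    · positivity
    · calc (m:ℝ) * τ ≤ (N:ℝ) * τ := by
            apply mul_le_mul_of_nonneg_right _ hτ0.le
            exact_mod_cast hm
        _ = T := by rw [hτ]; field_simp
  have hνsS : νs ≤ νS := by
    have h0 := hν 0 ⟨le_refl 0, hT.le⟩
    linarith [h0.1, h0.2]
  obtain ⟨hνn1, hνn2⟩ := hν (t n) (htmem n hnN)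
  have hνn_lt1 : ν (t n) < 1 := hνn2.trans_lt hνS
  have hνn_pos : 0 < ν (t n) := hνs.trans_le hνn1
  have hνs1 : νs < 1 := hνsS.trans_lt hνS
  -- endpoint ordering
  have hcast : ((k - 1 : ℕ) : ℝ) = (k : ℝ) - 1 := by
    have : (1:ℕ) ≤ k := hk
    push_cast [this]; ring
  have hab : t (k - 1) < t k := by
    rw [ht, ht, hcast]
    nlinarith [hτ0]
  have hbn : t k ≤ t n := by
    rw [ht, ht]
    apply mul_le_mul_of_nonneg_right _ hτ0.le
    exact_mod_cast hkn
  have ha0 : 0 ≤ t (k - 1) := by rw [ht]; positivity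
  have htnT : t n ≤ T := (htmem n hnN).2
  -- Gamma positivity
  have hGs : 0 < Real.Gamma (1 - νs) := Real.Gamma_pos_of_pos (by linarith)
  have hGS : 0 < Real.Gamma (1 - νS) := Real.Gamma_pos_of_pos (by linarith)
  have hGn : 0 < Real.Gamma (1 - ν (t n)) := Real.Gamma_pos_of_pos (by linarith)
  have hπA0 : 0 < πA := by
    rw [hπA]
    apply mul_pos (div_pos hGS hGs)
    exact lt_of_lt_of_le one_pos (le_max_left _ _)
  -- generic integral computation
  have key : ∀ r : ℝ, -1 < -r →
      (∫ s in (t (k-1))..(t k), (t n - s) ^ (-r)) =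
        ((t n - t (k-1)) ^ (1 - r) - (t n - t k) ^ (1 - r)) / (1 - r) := by
    intro r hr
    calc (∫ s in (t (k-1))..(t k), (t n - s) ^ (-r))
        = ∫ x in (t n - t k)..(t n - t (k-1)), x ^ (-r) :=
          integral_comp_sub_left (fun x => x ^ (-r)) (t n)
      _ = ((t n - t (k-1)) ^ (-r + 1) - (t n - t k) ^ (-r + 1)) / (-r + 1) :=
          integral_rpow (Or.inl hr)
      _ = ((t n - t (k-1)) ^ (1 - r) - (t n - t k) ^ (1 - r)) / (1 - r) := by
          rw [show -r + 1 = 1 - r by ring]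
  have integ : ∀ r : ℝ, -1 < -r →
      IntervalIntegrable (fun s => (t n - s) ^ (-r)) MeasureTheory.volume
        (t (k-1)) (t k) := by
    intro r hr
    have h := (intervalIntegrable_rpow' (a := t n - t (k-1)) (b := t n - t k) hr).comp_sub_left (t n)
    simpa using h
  -- b n k as an integral
  have hbnk : b n k = ∫ s in (t (k-1))..(t k),
      (t n - s) ^ (-(ν (t n))) / Real.Gamma (1 - ν (t n)) := by
    rw [hb n k hk hkn hnN, intervalIntegral.integral_div, key (ν (t n)) (by linarith)]
    have hG : Real.Gamma (2 - ν (t n)) = (1 - ν (t n)) * Real.Gamma (1 - ν (t n)) := by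
      rw [show (2:ℝ) - ν (t n) = (1 - ν (t n)) + 1 by ring,
        Real.Gamma_add_one (by linarith)]
    rw [hG]
    field_simp
  -- pointwise comparison
  have hptwise : ∀ s ∈ Set.Icc (t (k-1)) (t k),
      (1/πA) * ((t n - s) ^ (-νs) / Real.Gamma (1 - νs)) ≤
        (t n - s) ^ (-(ν (t n))) / Real.Gamma (1 - ν (t n)) := by
    intro s hs
    have hx0 : 0 ≤ t n - s := by linarith [hs.2]
    have hxT : t n - s ≤ T := by linarith [hs.1, ha0, htnT]
    set x := t n - s with hxdef
    rcases eq_or_lt_of_le hx0 with h0 | hxpos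
    · rw [← h0, Real.zero_rpow (by linarith : -νs ≠ 0),
        Real.zero_rpow (by linarith : -(ν (t n)) ≠ 0)]
      simp
    · have hGammaLe : Real.Gamma (1 - ν (t n)) ≤ Real.Gamma (1 - νS) :=
        my_gamma_anti (by linarith) (by linarith) (by linarith)
      have heq : (1/πA) * (x ^ (-νs) / Real.Gamma (1 - νs)) =
          x ^ (-νs) / (πA * Real.Gamma (1 - νs)) := by ring
      rw [heq, div_le_div_iff₀ (by positivity) hGn]
      have hsplit : x ^ (-νs) = x ^ (-(ν (t n))) * x ^ (ν (t n) - νs) := by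
        rw [← Real.rpow_add hxpos]; congr 1; ring
      have hxM : x ^ (ν (t n) - νs) ≤ max 1 (T ^ (νS - νs)) := by
        rcases le_or_gt x 1 with hx1 | hx1
        · exact le_trans (Real.rpow_le_one hx0 hx1 (by linarith)) (le_max_left _ _)
        · refine le_trans ?_ (le_max_right _ _)
          calc x ^ (ν (t n) - νs) ≤ x ^ (νS - νs) :=
                Real.rpow_le_rpow_of_exponent_le hx1.le (by linarith)
            _ ≤ T ^ (νS - νs) := Real.rpow_le_rpow hx0 hxT (by linarith)
      have hπΓ : πA * Real.Gamma (1 - νs) =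
          Real.Gamma (1 - νS) * max 1 (T ^ (νS - νs)) := by
        rw [hπA]; field_simp
      rw [hπΓ]
      calc x ^ (-νs) * Real.Gamma (1 - ν (t n))
          = (x ^ (-(ν (t n))) * x ^ (ν (t n) - νs)) * Real.Gamma (1 - ν (t n)) := by
            rw [← hsplit]
        _ ≤ (x ^ (-(ν (t n))) * max 1 (T ^ (νS - νs))) * Real.Gamma (1 - νS) := by
            apply mul_le_mul _ hGammaLe hGn.le (by positivity)
            exact mul_le_mul_of_nonneg_left hxM (Real.rpow_nonneg hx0 _)
        _ = x ^ (-(ν (t n))) * (Real.Gamma (1 - νS) * max 1 (T ^ (νS - νs))) := by ring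
  -- integrability
  have hIf : IntervalIntegrable
      (fun s => (t n - s) ^ (-(ν (t n))) / Real.Gamma (1 - ν (t n)))
      MeasureTheory.volume (t (k-1)) (t k) := (integ _ (by linarith)).div_const _
  have hIg : IntervalIntegrable
      (fun s => (1/πA) * ((t n - s) ^ (-νs) / Real.Gamma (1 - νs)))
      MeasureTheory.volume (t (k-1)) (t k) := ((integ _ (by linarith)).div_const _).const_mul _
  have hmono := intervalIntegral.integral_mono_on hab.le hIg hIf hptwise
  rw [intervalIntegral.integral_const_mul] at hmono
  -- conclusion
  rw [hA n k hk hkn hnN, hbnk, ge_iff_le]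
  have heq2 : (1/(πA*τ)) * (∫ s in (t (k-1))..(t k),
      (t n - s) ^ (-νs) / Real.Gamma (1 - νs)) =
      ((1/πA) * ∫ s in (t (k-1))..(t k),
        (t n - s) ^ (-νs) / Real.Gamma (1 - νs)) / τ := by ring
  rw [heq2]
  exact div_le_div_of_nonneg_right hmono hτ0.le
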